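/- Let V ⊂ ℝ² be a Euclidean TSP instance and T an optimal tour for V. If V' is a subdivision for (V,T), then the tour T' induced by V' is an optimal tour for V' (and has the same length as T). -/

import Mathlib

open Classical

/-- The `p`-norm distance between two points of `ℝ²`. For `p = 2` this is the
Euclidean distance. -/
noncomputable def pdist (p : ℝ) (a b : ℝ × ℝ) : ℝ :=
  (|a.1 - b.1| ^ p + |a.2 - b.2| ^ p) ^ (1 / p)

/-- The length of the closed polygon (cyclic sequence) given by the list `L`. -/
noncomputable def cycleLength (p : ℝ) (L : List (ℝ × ℝ)) : ℝ :=
  ((L.zip (L.rotate 1)).map fun e => pdist p e.1 e.2).sum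

/-- `L` is a tour (Hamiltonian cycle) of the finite point set `V`. -/
def IsTour (V : Finset (ℝ × ℝ)) (L : List (ℝ × ℝ)) : Prop :=
  L.Nodup ∧ L.toFinset = V

/-- `L` is an optimal (shortest) tour for `V`. -/
def IsOptimalTour (p : ℝ) (V : Finset (ℝ × ℝ)) (L : List (ℝ × ℝ)) : Prop :=
  IsTour V L ∧ ∀ L' : List (ℝ × ℝ), IsTour V L' → cycleLength p L ≤ cycleLength p L'

/-- The tour `T'` is induced by subdividing the tour `T`: for each vertex `a` of
`T` there is a list `F a` of points, all lying in the interior of the tour edge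
leaving `a` and ordered along this edge, such that `T'` is obtained from `T` by
inserting, after each vertex `a`, the points `F a`.  In particular `T'` and `T`
trace the same polygon in `ℝ²`. -/
def InducedBy (T T' : List (ℝ × ℝ)) : Prop :=
  ∃ F : (ℝ × ℝ) → List (ℝ × ℝ),
    T' = (T.map fun a => a :: F a).flatten ∧
    ∀ e ∈ T.zip (T.rotate 1),
      (∀ z ∈ F e.1, z ∈ openSegment ℝ e.1 e.2) ∧
      List.Chain' (fun u v => v ∈ segment ℝ u e.2) (e.1 :: F e.1)


/-! ### Auxiliary lemmas -/

lemma pdist_eq (a b : ℝ × ℝ) :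
    pdist 2 a b = dist (Complex.mk a.1 a.2) (Complex.mk b.1 b.2) := by
  rw [Complex.dist_eq, Complex.norm_def, Complex.normSq_apply]
  simp only [pdist, Complex.sub_re, Complex.sub_im]
  rw [Real.sqrt_eq_rpow]
  norm_num
  ring_nf

lemma pdist_nonneg (a b : ℝ × ℝ) : 0 ≤ pdist 2 a b := by
  rw [pdist_eq]; exact dist_nonneg

lemma pdist_triangle (a b c : ℝ × ℝ) : pdist 2 a c ≤ pdist 2 a b + pdist 2 b c := by
  rw [pdist_eq, pdist_eq, pdist_eq]; exact dist_triangle _ _ _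

lemma cmk_linear (s t : ℝ) (u w : ℝ × ℝ) :
    Complex.mk (s • u + t • w).1 (s • u + t • w).2
      = s • Complex.mk u.1 u.2 + t • Complex.mk w.1 w.2 := by
  apply Complex.ext <;> simp [Complex.real_smul]

lemma pdist_segment {u v w : ℝ × ℝ} (h : v ∈ segment ℝ u w) :
    pdist 2 u v + pdist 2 v w = pdist 2 u w := by
  rw [pdist_eq, pdist_eq, pdist_eq]
  apply dist_add_dist_of_mem_segment
  obtain ⟨s, t, hs, ht, hst, rfl⟩ := h
  exact ⟨s, t, hs, ht, hst, (cmk_linear s t u w).symm⟩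

/-- path length of a (non-closed) polyline -/
noncomputable def pathLen (L : List (ℝ × ℝ)) : ℝ :=
  ((L.zip L.tail).map fun e => pdist 2 e.1 e.2).sum

@[simp] lemma pathLen_nil : pathLen [] = 0 := rfl
@[simp] lemma pathLen_single (a : ℝ × ℝ) : pathLen [a] = 0 := rfl
lemma pathLen_cons_cons (a b : ℝ × ℝ) (l : List (ℝ × ℝ)) :
    pathLen (a :: b :: l) = pdist 2 a b + pathLen (b :: l) := rfl

lemma pathLen_append (l₁ l₂ : List (ℝ × ℝ)) (a : ℝ × ℝ) :
    pathLen (l₁ ++ a :: l₂) = pathLen (l₁ ++ [a]) + pathLen (a :: l₂) := by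
  induction l₁ with
  | nil => simp
  | cons x l ih =>
    cases l with
    | nil => simp [pathLen_cons_cons, ih]
    | cons y l' =>
      simp only [List.cons_append, pathLen_cons_cons] at *
      rw [ih]; ring

lemma cycleLength_eq_pathLen (a : ℝ × ℝ) (l : List (ℝ × ℝ)) :
    cycleLength 2 (a :: l) = pathLen (a :: l ++ [a]) := by
  have h1 : (a :: l).rotate 1 = l ++ [a] := by
    simpa using List.rotate_cons_succ l a 0
  rw [cycleLength, pathLen, h1]
  congr 2
  show _ = ((a :: l) ++ [a]).zip (l ++ [a])
  rw [show (l ++ [a]) = (l ++ [a]) ++ ([] : List (ℝ × ℝ)) by simp,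
    List.zip_append (by simp)]
  simp

lemma zip_rotate_one (A B : List (ℝ × ℝ)) (h : A.length = B.length) :
    (A.rotate 1).zip (B.rotate 1) = (A.zip B).rotate 1 := by
  cases A with
  | nil =>
    have : B = [] := List.length_eq_zero_iff.mp h.symm
    subst this; simp
  | cons a A' =>
    cases B with
    | nil => simp at h
    | cons b B' =>
      simp only [List.length_cons, Nat.succ.injEq] at h
      have r1 : ∀ (l : List (ℝ × ℝ)) (x : ℝ × ℝ), (x :: l).rotate 1 = l ++ [x] := by
        intro l x; simpa using List.rotate_cons_succ l x 0
      have r2 : ∀ (l : List ((ℝ×ℝ)×(ℝ×ℝ))) (x : (ℝ×ℝ)×(ℝ×ℝ)), (x :: l).rotate 1 = l ++ [x] := by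
        intro l x; simpa using List.rotate_cons_succ l x 0
      rw [r1, r1, List.zip_cons_cons, r2, List.zip_append h]
      simp

lemma cycleLength_rotate (L : List (ℝ × ℝ)) (n : ℕ) :
    cycleLength 2 (L.rotate n) = cycleLength 2 L := by
  induction n with
  | zero => simp
  | succ n ih =>
    have : L.rotate (n+1) = (L.rotate n).rotate 1 := by
      rw [List.rotate_rotate]
    rw [this, ← ih]
    generalize L.rotate n = M
    rw [cycleLength, cycleLength]
    have : (M.rotate 1).zip ((M.rotate 1).rotate 1) = (M.zip (M.rotate 1)).rotate 1 := by
      rw [← zip_rotate_one M (M.rotate 1) (by simp)]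
    rw [this]
    exact ((M.zip (M.rotate 1)).rotate_perm 1).map _ |>.sum_eq

lemma pathLen_cons_le (a x : ℝ × ℝ) (M : List (ℝ × ℝ)) :
    pathLen (a :: M) ≤ pdist 2 a x + pathLen (x :: M) := by
  cases M with
  | nil => simpa using pdist_nonneg a x
  | cons m M' =>
    rw [pathLen_cons_cons, pathLen_cons_cons, ← add_assoc]
    exact add_le_add_left (pdist_triangle a x m) _

lemma pathLen_sublist_cons {M L : List (ℝ × ℝ)} (h : M.Sublist L) :
    ∀ a, pathLen (a :: M) ≤ pathLen (a :: L) := by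
  induction h with
  | slnil => intro a; exact le_refl _
  | cons x h ih =>
    intro a
    calc pathLen (a :: _) ≤ pdist 2 a x + pathLen (x :: _) := pathLen_cons_le _ _ _
    _ ≤ pdist 2 a x + pathLen (x :: _) := add_le_add_right (ih x) _
    _ = pathLen (a :: x :: _) := (pathLen_cons_cons a x _).symm
  | cons_cons x h ih =>
    intro a
    rw [pathLen_cons_cons, pathLen_cons_cons]
    exact add_le_add_right (ih x) _

lemma chain_pathLen {b : ℝ × ℝ} :
    ∀ (F : List (ℝ × ℝ)) (a : ℝ × ℝ),
      List.Chain' (fun u v => v ∈ segment ℝ u b) (a :: F) →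
      pathLen (a :: F ++ [b]) = pdist 2 a b := by
  intro F
  induction F with
  | nil => intro a _; simp [pathLen_cons_cons]
  | cons z F' ih =>
    intro a hc
    unfold List.Chain' at hc; rw [List.isChain_cons_cons] at hc
    have h1 : pathLen (a :: z :: (F' ++ [b])) = pdist 2 a z + pathLen (z :: F' ++ [b]) :=
      pathLen_cons_cons _ _ _
    have h2 := ih z hc.2
    simp only [List.cons_append] at *
    rw [h1, h2, pdist_segment hc.1]

lemma pathLen_flatten (F : (ℝ×ℝ) → List (ℝ×ℝ)) :
    ∀ (T : List (ℝ×ℝ)) (z : ℝ×ℝ),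
      pathLen ((T.map fun a => a :: F a).flatten ++ [z]) =
      ((T.zip (T.tail ++ [z])).map fun e => pathLen (e.1 :: F e.1 ++ [e.2])).sum := by
  intro T
  induction T with
  | nil => intro z; simp
  | cons a T' ih =>
    intro z
    cases T' with
    | nil => simp
    | cons a' T'' =>
      have key : ((a :: a' :: T'').map fun x => x :: F x).flatten ++ [z]
          = (a :: F a) ++ (a' :: (F a' ++ (((T''.map fun x => x :: F x).flatten) ++ [z]))) := by
        simp
      rw [key, pathLen_append]
      have h2 : (a' :: (F a' ++ (((T''.map fun x => x :: F x).flatten) ++ [z])))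
          = ((a' :: T'').map fun x => x :: F x).flatten ++ [z] := by simp
      rw [h2, ih z]
      simp only [List.zip_cons_cons, List.map_cons, List.sum_cons, List.tail_cons,
        List.cons_append]

/-- If `T` is an optimal tour for `V`, `V'` is a subdivision for `(V, T)` and
`T'` is the tour of `V'` induced by `V'`, then `T'` is an optimal tour for `V'`
and has the same length as `T`. -/
theorem subdivision_preserves_optimality (V V' : Finset (ℝ × ℝ))
    (T T' : List (ℝ × ℝ)) (hopt : IsOptimalTour 2 V T)
    (hT' : IsTour V' T') (hind : InducedBy T T') :
    IsOptimalTour 2 V' T' ∧ cycleLength 2 T' = cycleLength 2 T := by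
  obtain ⟨F, hTeq, hF⟩ := hind
  obtain ⟨⟨hTnd, hTfin⟩, hTmin⟩ := hopt
  have hlen : cycleLength 2 T' = cycleLength 2 T := by
    cases T with
    | nil => simp at hTeq; simp [hTeq]
    | cons t0 R =>
      have hrot : (t0 :: R).rotate 1 = R ++ [t0] := by
        simpa using List.rotate_cons_succ R t0 0
      have hT'c : T' = t0 :: (F t0 ++ ((R.map fun a => a :: F a).flatten)) := by
        simp [hTeq]
      rw [hT'c, cycleLength_eq_pathLen]
      have : (t0 :: (F t0 ++ (R.map fun a => a :: F a).flatten) ++ [t0])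
          = ((t0 :: R).map fun a => a :: F a).flatten ++ [t0] := by simp
      rw [this, pathLen_flatten, cycleLength, hrot]
      simp only [List.tail_cons]
      congr 1
      apply List.map_congr_left
      intro e he
      have := hF e (by rwa [hrot])
      exact chain_pathLen (F e.1) e.1 this.2
  refine ⟨⟨hT', ?_⟩, hlen⟩
  intro L' hL'
  rw [hlen]
  have hVsub : V ⊆ V' := by
    intro v hv
    rw [← hTfin, List.mem_toFinset] at hv
    rw [← hT'.2, List.mem_toFinset, hTeq]
    exact List.mem_flatten.mpr ⟨v :: F v, List.mem_map.mpr ⟨v, hv, rfl⟩, List.mem_cons_self⟩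
  cases T with
  | nil =>
    have hT'e : T' = [] := by simp [hTeq]
    have hV'e : V' = ∅ := by rw [← hT'.2, hT'e]; simp
    have : L' = [] := by
      have := hL'.2; rw [hV'e] at this
      exact List.toFinset_eq_empty_iff L' |>.mp this
    simp [this, cycleLength]
  | cons t0 R =>
    have ht0V : t0 ∈ V := by rw [← hTfin]; simp
    have ht0L' : t0 ∈ L' := by
      rw [← List.mem_toFinset, hL'.2]; exact hVsub ht0V
    obtain ⟨l1, l2, rfl⟩ := List.append_of_mem ht0L'
    set Lr : List (ℝ × ℝ) := t0 :: (l2 ++ l1) with hLr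
    have hperm : (l1 ++ t0 :: l2).Perm Lr := by
      have := List.rotate_perm (l1 ++ t0 :: l2) l1.length
      rw [List.rotate_eq_drop_append_take (by simp)] at this
      simpa [hLr] using this.symm
    have hcycLr : cycleLength 2 Lr = cycleLength 2 (l1 ++ t0 :: l2) := by
      have := cycleLength_rotate (l1 ++ t0 :: l2) l1.length
      rw [List.rotate_eq_drop_append_take (by simp)] at this
      simpa [hLr] using this
    have hLrnd : Lr.Nodup := hperm.nodup_iff.mp hL'.1
    have hLrfin : Lr.toFinset = V' := by
      rw [← List.toFinset_eq_of_perm _ _ hperm]; exact hL'.2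
    set M : List (ℝ × ℝ) := t0 :: ((l2 ++ l1).filter (· ∈ V)) with hM
    have hMsub : M.Sublist Lr := List.Sublist.cons₂ t0 (List.filter_sublist)
    have hMfilter : M = Lr.filter (· ∈ V) := by
      rw [hLr, List.filter_cons_of_pos (by simpa using ht0V)]
    have hMtour : IsTour V M := by
      constructor
      · exact hLrnd.sublist hMsub
      · rw [hMfilter, List.toFinset_filter, hLrfin]
        ext x; simp [Finset.mem_filter]
        intro hx; exact hVsub hx
    have h1 : cycleLength 2 (t0 :: R) ≤ cycleLength 2 M := hTmin M hMtour
    have h2 : cycleLength 2 M ≤ cycleLength 2 Lr := by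
      rw [hM, hLr, cycleLength_eq_pathLen, cycleLength_eq_pathLen]
      exact pathLen_sublist_cons
        (List.Sublist.append (List.filter_sublist) (List.Sublist.refl _)) t0
    calc cycleLength 2 (t0 :: R) ≤ cycleLength 2 M := h1
      _ ≤ cycleLength 2 Lr := h2
      _ = cycleLength 2 (l1 ++ t0 :: l2) := hcycLr
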